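/- Let D ≥ 1, σ > 0, and let m, m′ ∈ ℝ^D with m ≠ m′. Let Z be a random vector in ℝ^D whose coordinates are independent with Z_i ∼ N(m_i, σ²). Then P(‖Z − m′‖ ≤ ‖Z − m‖) ≤ Φ(−‖m − m′‖ / (2σ)). -/

import Mathlib

open MeasureTheory ProbabilityTheory
open scoped NNReal

/-- The cumulative distribution function Φ of the standard normal distribution. -/
noncomputable def stdNormalCDF (x : ℝ) : ℝ :=
  ((gaussianReal 0 1) (Set.Iic x)).toReal

/-- The product Gaussian measure on `EuclideanSpace ℝ (Fin D)` with mean `m` and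
covariance `v • I_D`: the product measure whose `i`-th factor is `N(m i, v)`. -/
noncomputable def gaussianPi {D : ℕ} (m : EuclideanSpace ℝ (Fin D)) (v : ℝ≥0) :
    Measure (EuclideanSpace ℝ (Fin D)) :=
  (Measure.pi fun i => gaussianReal (m i) v).map
    (MeasurableEquiv.toLp 2 (Fin D → ℝ))

open scoped NNReal ENNReal

lemma lintegral_pi_prod {n : ℕ} {E : Fin n → Type*} [∀ i, MeasurableSpace (E i)]
    (μ : ∀ i, Measure (E i)) [∀ i, SigmaFinite (μ i)] (f : ∀ i, E i → ℝ≥0∞)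
    (hf : ∀ i, Measurable (f i)) :
    ∫⁻ x, ∏ i, f i (x i) ∂Measure.pi μ = ∏ i, ∫⁻ x, f i x ∂μ i := by
  induction n with
  | zero => simp [Measure.pi_of_empty]
  | succ n ih =>
    have hmeas : Measurable (fun x : ∀ i, E i => ∏ i, f i (x i)) :=
      Finset.measurable_prod _ fun i _ => (hf i).comp (measurable_pi_apply i)
    have hmp := (measurePreserving_piFinSuccAbove μ 0).symm
    rw [← hmp.lintegral_comp (f := fun x : ∀ i, E i => ∏ i, f i (x i)) hmeas]
    simp_rw [MeasurableEquiv.piFinSuccAbove_symm_apply, Fin.insertNthEquiv,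
      Fin.prod_univ_succ, Fin.insertNth_zero]
    simp only [Fin.zero_succAbove, Function.comp_def, Equiv.coe_fn_mk, Fin.cons_zero,
      Fin.cons_succ, cast_eq]
    rw [← ih (fun j => μ (Fin.succ j)) (fun j => f (Fin.succ j)) (fun j => hf _)]
    have hpm := lintegral_prod_mul (μ := μ 0) (ν := Measure.pi fun j : Fin n => μ j.succ) (hf 0).aemeasurable
      (show Measurable (fun y : ∀ j : Fin n, E j.succ => ∏ x, f x.succ (y x)) from
        Finset.measurable_prod Finset.univ (fun i _ => (hf (Fin.succ i)).comp (measurable_pi_apply i))).aemeasurable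
    exact hpm

lemma pi_withDensity' {n : ℕ} {E : Fin n → Type*} [∀ i, MeasurableSpace (E i)]
    (μ : ∀ i, Measure (E i)) [∀ i, SigmaFinite (μ i)] (f : ∀ i, E i → ℝ≥0∞)
    (hf : ∀ i, Measurable (f i)) (hfin : ∀ i, ∫⁻ x, f i x ∂μ i ≠ ⊤) :
    Measure.pi (fun i => (μ i).withDensity (f i))
      = (Measure.pi μ).withDensity (fun x => ∏ i, f i (x i)) := by
  haveI : ∀ i, IsFiniteMeasure ((μ i).withDensity (f i)) :=
    fun i => isFiniteMeasure_withDensity (hfin i)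
  refine Measure.pi_eq fun s hs => ?_
  have hFmeas : Measurable (fun x : ∀ i, E i => ∏ i, f i (x i)) :=
    Finset.measurable_prod _ fun i _ => (hf i).comp (measurable_pi_apply i)
  rw [withDensity_apply _ (MeasurableSet.univ_pi hs)]
  have hind : ∀ x : ∀ i, E i,
      Set.indicator (Set.pi Set.univ s) (fun x => ∏ i, f i (x i)) x
        = ∏ i, (s i).indicator (f i) (x i) := by
    intro x
    by_cases hx : x ∈ Set.pi Set.univ s
    · rw [Set.indicator_of_mem hx]
      exact Finset.prod_congr rfl fun i _ =>
        (Set.indicator_of_mem (hx i (Set.mem_univ i)) _).symm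
    · rw [Set.indicator_of_notMem hx]
      obtain ⟨i, hi⟩ := not_forall.mp (Set.mem_univ_pi.not.mp hx)
      exact (Finset.prod_eq_zero (Finset.mem_univ i)
        (Set.indicator_of_notMem hi _)).symm
  rw [← lintegral_indicator (MeasurableSet.univ_pi hs) (fun x : ∀ i, E i => ∏ i, f i (x i))]
  simp_rw [hind]
  rw [lintegral_pi_prod μ _ (fun i => (hf i).indicator (hs i))]
  exact Finset.prod_congr rfl fun i _ => by
    rw [lintegral_indicator (hs i), withDensity_apply _ (hs i)]

lemma withDensity_map_equiv' {α β : Type*} [MeasurableSpace α] [MeasurableSpace β]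
    (e : α ≃ᵐ β) (μ : Measure α) {f : α → ℝ≥0∞} (hf : Measurable f) :
    (μ.withDensity f).map e = (μ.map e).withDensity (f ∘ e.symm) := by
  ext s hs
  rw [Measure.map_apply e.measurable hs, withDensity_apply _ (e.measurable hs),
    withDensity_apply _ hs, setLIntegral_map hs (hf.comp e.symm.measurable) e.measurable]
  refine setLIntegral_congr_fun (e.measurable hs) (fun x _ => ?_)
  simp

open Real in
lemma prod_gaussianPDF_eq {D : ℕ} (m : EuclideanSpace ℝ (Fin D)) (v : ℝ≥0)
    (z : EuclideanSpace ℝ (Fin D)) :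
    (∏ i, gaussianPDF (m i) v (z i))
      = ENNReal.ofReal ((√(2 * π * v))⁻¹ ^ D * rexp (-‖z - m‖ ^ 2 / (2 * v))) := by
  simp_rw [gaussianPDF]
  rw [← ENNReal.ofReal_prod_of_nonneg (fun i _ => gaussianPDFReal_nonneg _ _ _)]
  congr 1
  simp_rw [gaussianPDFReal]
  rw [Finset.prod_mul_distrib, Finset.prod_const, ← Real.exp_sum, Finset.card_univ,
    Fintype.card_fin]
  congr 1
  have hnorm : ‖z - m‖ ^ 2 = ∑ i, (z i - m i) ^ 2 := by
    rw [EuclideanSpace.norm_eq, Real.sq_sqrt (Finset.sum_nonneg fun i _ => sq_nonneg _)]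
    refine Finset.sum_congr rfl fun i _ => ?_
    rw [Real.norm_eq_abs, sq_abs]
    congr 1
  rw [hnorm, ← Finset.sum_div, ← Finset.sum_neg_distrib]

open Real in
lemma gaussianPi_eq_withDensity {D : ℕ} (m : EuclideanSpace ℝ (Fin D)) (v : ℝ≥0) (hv : v ≠ 0) :
    (Measure.pi fun i => gaussianReal (m i) v).map
        (MeasurableEquiv.toLp 2 (Fin D → ℝ))
      = (volume : Measure (EuclideanSpace ℝ (Fin D))).withDensity
          (fun z => ENNReal.ofReal ((√(2 * π * v))⁻¹ ^ D * rexp (-‖z - m‖ ^ 2 / (2 * v)))) := by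
  have h1 : (Measure.pi fun i : Fin D => gaussianReal (m i) v)
      = (volume : Measure (Fin D → ℝ)).withDensity
          (fun x => ∏ i, gaussianPDF (m i) v (x i)) := by
    have := pi_withDensity' (fun _ : Fin D => (volume : Measure ℝ))
      (fun i => gaussianPDF (m i) v) (fun i => measurable_gaussianPDF _ _)
      (fun i => by rw [lintegral_gaussianPDF_eq_one (m i) hv]; exact ENNReal.one_ne_top)
    rw [volume_pi]
    rw [← this]
    exact congrArg Measure.pi (funext fun i => gaussianReal_of_var_ne_zero (m i) hv)
  rw [h1, withDensity_map_equiv' (MeasurableEquiv.toLp 2 (Fin D → ℝ)) _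
    (f := fun x : Fin D → ℝ => ∏ i, gaussianPDF (m i) v (x i))
    (show Measurable (fun x : Fin D → ℝ => ∏ i, gaussianPDF (m i) v (x i)) from
      Finset.measurable_prod _ fun i _ => (measurable_gaussianPDF _ _).comp (measurable_pi_apply i))]
  rw [(show MeasurePreserving (MeasurableEquiv.toLp 2 (Fin D → ℝ)) volume volume from
    MeasurePreserving.symm _ (EuclideanSpace.volume_preserving_symm_measurableEquiv_toLp (Fin D))).map_eq]
  congr 1
  funext z
  have : ∀ i : Fin D, ((MeasurableEquiv.toLp 2 (Fin D → ℝ)).symm z) i = z i := fun i => rfl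
  simp only [Function.comp_apply, this]
  exact prod_gaussianPDF_eq m v z
open Real in
open scoped RealInnerProductSpace in
/-- For `Z ∼ N(m, σ² I_D)` and `m ≠ m'`,
`P(‖Z − m′‖ ≤ ‖Z − m‖) ≤ Φ(−‖m − m′‖ / (2σ))`. -/
theorem gaussian_prob_closer_to_other_center_le
    (D : ℕ) (hD : 1 ≤ D) (σ : ℝ) (hσ : 0 < σ)
    (m m' : EuclideanSpace ℝ (Fin D)) (hne : m ≠ m') :
    gaussianPi m ((σ ^ 2).toNNReal)
        {z : EuclideanSpace ℝ (Fin D) | dist z m' ≤ dist z m}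
      ≤ ENNReal.ofReal (stdNormalCDF (-(dist m m') / (2 * σ))) := by
  classical
  set v : ℝ≥0 := (σ ^ 2).toNNReal with hv_def
  have hvR : (v : ℝ) = σ ^ 2 := Real.coe_toNNReal _ (sq_nonneg σ)
  have hv : v ≠ 0 := by
    intro h
    rw [h] at hvR
    exact (pow_pos hσ 2).ne' (by simpa using hvR.symm)
  set u : EuclideanSpace ℝ (Fin D) := m - m' with hu_def
  have hu : u ≠ 0 := sub_ne_zero.mpr hne
  have hu' : (0:ℝ) < ‖u‖ := norm_pos_iff.mpr hu
  set i0 : Fin D := ⟨0, hD⟩ with hi0_def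
  set e0 : EuclideanSpace ℝ (Fin D) := ‖u‖⁻¹ • u with he0_def
  -- orthonormal basis with b i0 = e0
  have horth : Orthonormal ℝ (({i0} : Set (Fin D)).restrict (fun _ : Fin D => e0)) := by
    refine ⟨fun i => ?_, fun i j hij => absurd ?_ hij⟩
    · show ‖‖u‖⁻¹ • u‖ = 1
      simp only [Set.restrict_apply, he0_def, norm_smul, norm_inv, norm_norm]
      exact inv_mul_cancel₀ hu'.ne'
    · ext
      have hi := i.2
      have hj := j.2
      simp only [Set.mem_singleton_iff] at hi hj
      rw [hi, hj]
  have hcard : Module.finrank ℝ (EuclideanSpace ℝ (Fin D)) = Fintype.card (Fin D) := by simp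
  obtain ⟨b, hb⟩ := horth.exists_orthonormalBasis_extension_of_card_eq hcard
  have hb0 : b i0 = e0 := hb i0 rfl
  set L : EuclideanSpace ℝ (Fin D) ≃ₗᵢ[ℝ] EuclideanSpace ℝ (Fin D) := b.repr.symm with hL_def
  set T : EuclideanSpace ℝ (Fin D) → EuclideanSpace ℝ (Fin D) := fun w => m + L w with hT_def
  have hT : MeasurePreserving T volume volume :=
    (measurePreserving_add_left volume m).comp L.measurePreserving
  set a : ℝ := -‖u‖ / 2 with ha_def
  set A : Set (EuclideanSpace ℝ (Fin D)) := {z | dist z m' ≤ dist z m} with hA_def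
  set B : Set (EuclideanSpace ℝ (Fin D)) := {w | w i0 ≤ a} with hB_def
  have hA : MeasurableSet A :=
    measurableSet_le ((continuous_id.dist continuous_const).measurable)
      ((continuous_id.dist continuous_const).measurable)
  have hw0meas : Measurable (fun w : EuclideanSpace ℝ (Fin D) => w i0) :=
    (measurable_pi_apply _).comp (MeasurableEquiv.toLp 2 (Fin D → ℝ)).symm.measurable
  have hB : MeasurableSet B := measurableSet_le hw0meas measurable_const
  set g : EuclideanSpace ℝ (Fin D) → ℝ≥0∞ :=
    fun z => ENNReal.ofReal ((√(2 * π * v))⁻¹ ^ D * rexp (-‖z - m‖ ^ 2 / (2 * v))) with hg_def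
  set g0 : EuclideanSpace ℝ (Fin D) → ℝ≥0∞ :=
    fun z => ENNReal.ofReal ((√(2 * π * v))⁻¹ ^ D * rexp (-‖z - 0‖ ^ 2 / (2 * v))) with hg0_def
  have hgmeas : Measurable g :=
    ENNReal.measurable_ofReal.comp (Continuous.measurable (by fun_prop))
  -- membership equivalence
  have hmem : ∀ w, T w ∈ A ↔ w ∈ B := by
    intro w
    have h1 : T w ∈ A ↔ ⟪T w, u⟫ ≤ (‖m‖ ^ 2 - ‖m'‖ ^ 2) / 2 := by
      rw [hA_def, Set.mem_setOf_eq, dist_eq_norm, dist_eq_norm,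
        ← pow_le_pow_iff_left₀ (norm_nonneg _) (norm_nonneg _) two_ne_zero,
        norm_sub_sq_real, norm_sub_sq_real, hu_def, inner_sub_right]
      constructor <;> intro h <;> linarith
    rw [h1]
    have h2 : ⟪T w, u⟫ = ⟪m, u⟫ + ‖u‖ * w i0 := by
      have hLe : ⟪L w, e0⟫ = w i0 := by
        rw [real_inner_comm, ← hb0, ← OrthonormalBasis.repr_apply_apply, hL_def,
          LinearIsometryEquiv.apply_symm_apply]
      have hLe' : ⟪L w, e0⟫ = ‖u‖⁻¹ * ⟪L w, u⟫ := by rw [he0_def, real_inner_smul_right]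
      have hLu : ⟪L w, u⟫ = ‖u‖ * w i0 := by
        rw [← hLe, hLe', ← mul_assoc, mul_inv_cancel₀ hu'.ne', one_mul]
      rw [hT_def, inner_add_left, hLu]
    rw [h2]
    have h3 : (‖m‖ ^ 2 - ‖m'‖ ^ 2) / 2 - ⟪m, u⟫ = -‖u‖ ^ 2 / 2 := by
      have e1 : ⟪m, u⟫ = ‖m‖ ^ 2 - ⟪m, m'⟫ := by
        rw [hu_def, inner_sub_right, real_inner_self_eq_norm_sq]
      have e2 : ‖u‖ ^ 2 = ‖m‖ ^ 2 - 2 * ⟪m, m'⟫ + ‖m'‖ ^ 2 := by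
        rw [hu_def, norm_sub_sq_real]
      rw [e1, e2]; ring
    have h4 : ‖u‖ * w i0 ≤ -‖u‖ ^ 2 / 2 ↔ w i0 ≤ a := by
      rw [ha_def]
      constructor
      · intro h
        have := (mul_le_mul_iff_right₀ hu').mp (le_of_le_of_eq h (by ring_nf : -‖u‖ ^ 2 / 2 = ‖u‖ * (-‖u‖ / 2)))
        exact this
      · intro h
        calc ‖u‖ * w i0 ≤ ‖u‖ * (-‖u‖ / 2) := by exact (mul_le_mul_iff_right₀ hu').mpr h
          _ = -‖u‖ ^ 2 / 2 := by ring
    rw [hB_def, Set.mem_setOf_eq, ← h4]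
    constructor <;> intro h <;> linarith
  -- main computation
  have key : gaussianPi m v A = gaussianReal 0 v (Set.Iic a) := by
    rw [gaussianPi, gaussianPi_eq_withDensity m v hv, ← hg_def, withDensity_apply _ hA,
      ← lintegral_indicator hA, ← hT.lintegral_comp (hgmeas.indicator hA)]
    have hpt : ∀ w, A.indicator g (T w) = B.indicator g0 w := by
      intro w
      by_cases hw : w ∈ B
      · rw [Set.indicator_of_mem hw, Set.indicator_of_mem ((hmem w).mpr hw)]
        have hnrm : ‖T w - m‖ = ‖w - 0‖ := by
          rw [hT_def]
          simp only [add_sub_cancel_left, sub_zero]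
          exact L.norm_map w
        simp only [hg_def, hg0_def, hnrm]
      · rw [Set.indicator_of_notMem hw, Set.indicator_of_notMem (fun hc => hw ((hmem w).mp hc))]
    simp_rw [hpt]
    rw [lintegral_indicator hB, ← withDensity_apply _ hB,
      ← gaussianPi_eq_withDensity 0 v hv]
    have h0 : ∀ i : Fin D, (0 : EuclideanSpace ℝ (Fin D)) i = 0 := fun i => rfl
    simp only [h0]
    rw [Measure.map_apply (MeasurableEquiv.toLp 2 (Fin D → ℝ)).measurable hB]
    have hpre : (MeasurableEquiv.toLp 2 (Fin D → ℝ)) ⁻¹' B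
        = Set.pi Set.univ (fun i => if i = i0 then Set.Iic a else Set.univ) := by
      ext x
      simp only [Set.mem_preimage, Set.mem_univ_pi]
      constructor
      · intro hx i
        by_cases hi : i = i0
        · subst hi; simp only [if_pos rfl]; exact hx
        · simp [hi]
      · intro hx
        have := hx i0
        exact this
    rw [hpre, Measure.pi_pi]
    rw [Finset.prod_eq_single i0 (fun i _ hi => by simp [hi]) (fun h => absurd (Finset.mem_univ i0) h)]
    simp
  rw [key]
  -- scaling
  have hscale : gaussianReal 0 v = (gaussianReal 0 1).map (σ * ·) := by
    rw [gaussianReal_map_const_mul σ]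
    congr 1
    · ring
    · ext
      simp [hvR]
  rw [hscale, Measure.map_apply (measurable_const_mul σ) measurableSet_Iic]
  have hpre2 : (σ * ·) ⁻¹' Set.Iic a = Set.Iic (a / σ) := by
    ext x
    simp only [Set.mem_preimage, Set.mem_Iic]
    rw [← le_div_iff₀' hσ]
  rw [hpre2]
  have harg : a / σ = -(dist m m') / (2 * σ) := by
    rw [ha_def, dist_eq_norm, ← hu_def, div_div]
  rw [harg, stdNormalCDF, ENNReal.ofReal_toReal (measure_ne_top _ _)]
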